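/- Every function f : D^n → D on the two-element set D = {0,1}, expressed in vector form via 1 ↦ δ_2^1 and 0 ↦ δ_2^2, admits a unique logical matrix M_f ∈ L_{2×2^n} such that f(x_1,...,x_n) = M_f ⋉ x_1 ⋉ ... ⋉ x_n for all x_i ∈ Δ_2. -/

import Mathlib

open Matrix

/-- A logical matrix: every column is a standard basis vector. -/
def IsLogical {I J : Type*} [DecidableEq I] (M : Matrix I J ℝ) : Prop :=
  ∀ j, ∃ i₀, ∀ i, M i j = if i = i₀ then (1 : ℝ) else 0

/-- Vector form of a Boolean value: `1 ↦ δ_2^1`, `0 ↦ δ_2^2`. -/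
def vecB (b : Bool) : Fin 2 → ℝ :=
  fun r => if r = (if b then (0 : Fin 2) else 1) then 1 else 0

lemma mulVec_indicator {n : ℕ} (M : Matrix (Fin 2) (Fin n → Bool) ℝ)
    (v : Fin n → Bool) (r : Fin 2) :
    M.mulVec (fun w => if w = v then (1 : ℝ) else 0) r = M r v := by
  simp [mulVec, dotProduct, mul_ite]

/-- Every `f : D^n → D` admits a unique logical matrix `M_f ∈ L_{2×2^n}` (columns
indexed by assignments `Fin n → Bool`, identified with `Fin (2^n)`) such that in
vector form `f(x_1,…,x_n) = M_f ⋉ x_1 ⋉ ⋯ ⋉ x_n`; here `x_1 ⋉ ⋯ ⋉ x_n` is the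
Kronecker product of the δ-vectors of the arguments, i.e. the δ-vector at the
assignment `v`. -/
theorem exists_unique_structure_matrix (n : ℕ) (f : (Fin n → Bool) → Bool) :
    ∃! M : Matrix (Fin 2) (Fin n → Bool) ℝ,
      IsLogical M ∧
      ∀ v : Fin n → Bool,
        M.mulVec (fun w => if w = v then (1 : ℝ) else 0) = vecB (f v) := by
  refine ⟨fun r v => vecB (f v) r, ⟨?_, ?_⟩, ?_⟩
  · intro v
    exact ⟨if f v then 0 else 1, fun i => rfl⟩
  · intro v
    funext r
    exact mulVec_indicator _ v r
  · rintro M ⟨-, hM⟩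
    funext r v
    rw [← mulVec_indicator M v r, hM v]
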